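/- Let F and G be cumulative distribution functions on ℝ, let t* ∈ ℝ, δ > 0 and α ∈ ℝ, and suppose sup_{t ≥ t*} |F(t) − G(t)| ≤ δ. If q_F(α) > t*, then q_G(α−δ) ≤ q_F(α) ≤ q_G(α+δ). Moreover, if G(t*) + δ < α then q_F(α) > t*. -/

import Mathlib

open Filter Topology

noncomputable section

/-- A cumulative distribution function on `ℝ`: non-decreasing, right-continuous,
tending to `0` at `-∞` and to `1` at `+∞`. -/
def IsCDF (H : ℝ → ℝ) : Prop :=
  Monotone H ∧ (∀ x : ℝ, ContinuousWithinAt H (Set.Ici x) x) ∧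
    Tendsto H atBot (𝓝 0) ∧ Tendsto H atTop (𝓝 1)

/-- The quantile function `q_H(α) = inf {t : H(t) ≥ α}`, with `inf ∅ = +∞`,
valued in the extended reals. -/
def quantileFn (H : ℝ → ℝ) (a : ℝ) : EReal :=
  sInf {x : EReal | ∃ t : ℝ, x = (t : EReal) ∧ a ≤ H t}

/-- a Kolmogorov-type bound on `[t*, ∞)` implies a bound between
quantiles. -/
theorem kolmogorov_bound_to_quantile_bound
    (F G : ℝ → ℝ) (hF : IsCDF F) (hG : IsCDF G)
    (tstar δ : ℝ) (hδ : 0 < δ) (α : ℝ)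
    (hsup : ∀ t : ℝ, tstar ≤ t → |F t - G t| ≤ δ) :
    ((tstar : EReal) < quantileFn F α →
      quantileFn G (α - δ) ≤ quantileFn F α ∧ quantileFn F α ≤ quantileFn G (α + δ)) ∧
    (G tstar + δ < α → (tstar : EReal) < quantileFn F α) := by

  obtain ⟨hFmono, hFrc, -, -⟩ := hF
  obtain ⟨hGmono, -, -, -⟩ := hG
  constructor
  · intro hlt
    constructor
    · apply le_sInf
      rintro x ⟨t, rfl, ht⟩
      by_cases htt : tstar ≤ t
      · apply sInf_le
        refine ⟨t, rfl, ?_⟩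
        have h := abs_le.mp (hsup t htt)
        linarith
      · exfalso
        have h1 : quantileFn F α ≤ (t : EReal) := sInf_le ⟨t, rfl, ht⟩
        have h2 : (t : EReal) < (tstar : EReal) := by
          exact_mod_cast not_le.mp htt
        exact absurd hlt (not_lt.mpr (h1.trans h2.le))
    · apply le_sInf
      rintro x ⟨t, rfl, ht⟩
      by_cases htt : tstar ≤ t
      · apply sInf_le
        refine ⟨t, rfl, ?_⟩
        have h := abs_le.mp (hsup t htt)
        linarith
      · exfalso
        push_neg at htt
        have h1 : α + δ ≤ G tstar := le_trans ht (hGmono htt.le)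
        have h2 := abs_le.mp (hsup tstar le_rfl)
        have h3 : α ≤ F tstar := by linarith
        have h4 : quantileFn F α ≤ (tstar : EReal) := sInf_le ⟨tstar, rfl, h3⟩
        exact absurd hlt (not_lt.mpr h4)
  · intro hα
    have hFt : F tstar < α := by
      have h := abs_le.mp (hsup tstar le_rfl); linarith
    have hcont := hFrc tstar
    have hmem : F ⁻¹' Set.Iio α ∈ 𝓝[Set.Ici tstar] tstar := hcont (Iio_mem_nhds hFt)
    obtain ⟨u, hu, hsub⟩ := mem_nhdsGE_iff_exists_Ico_subset.mp hmem
    set t' := (tstar + u) / 2 with ht'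
    have hu' : tstar < u := hu
    have ht1 : tstar < t' := by rw [ht']; linarith
    have ht2 : t' < u := by rw [ht']; linarith
    have hFt' : F t' < α := hsub ⟨ht1.le, ht2⟩
    have hbound : (t' : EReal) ≤ quantileFn F α := by
      apply le_sInf
      rintro x ⟨t, rfl, ht⟩
      have : t' ≤ t := by
        by_contra h
        push_neg at h
        exact absurd ht (not_le.mpr (lt_of_le_of_lt (hFmono h.le) hFt'))
      exact_mod_cast this
    calc (tstar : EReal) < (t' : EReal) := by exact_mod_cast ht1
      _ ≤ quantileFn F α := hbound
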